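/- Let θ ∈ (0,1], λ ∈ (0,1), Λ₀ > 0, and C > 0. Let (e_k), (ε_k), (d_k) be sequences of nonnegative real numbers such that for every k ≥ 0: (i) e_{k+1}² ≤ e_k² − d_k²; (ii) for every δ > 0, ε_{k+1}² ≤ (1 + δ)·(1 − λθ²)·ε_k² + (1 + δ⁻¹)·Λ₀·d_k²; and (iii) e_k ≤ C·ε_k. Then there exist γ > 0 and α ∈ (0,1), depending only on θ, λ, Λ₀ and C, such that for all k ≥ 0: e_{k+1}² + γ·ε_{k+1}² ≤ α²·(e_k² + γ·ε_k²). -/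

import Mathlib

set_option maxHeartbeats 1000000 in
/-- Contraction of the quasi-error: under the Pythagoras identity, the perturbed
estimator reduction with Dörfler marking, and the a posteriori upper bound,
there are `γ > 0` and `α ∈ (0,1)` with
`e_{k+1}² + γ ε_{k+1}² ≤ α² (e_k² + γ ε_k²)` for all `k`. -/
theorem quasi_error_contraction
    (θ lam Λ₀ C : ℝ) (hθ0 : 0 < θ) (hθ1 : θ ≤ 1) (hlam0 : 0 < lam) (hlam1 : lam < 1)
    (hΛ₀ : 0 < Λ₀) (hC : 0 < C)
    (e ε d : ℕ → ℝ)
    (he : ∀ k, 0 ≤ e k) (hε : ∀ k, 0 ≤ ε k) (hd : ∀ k, 0 ≤ d k)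
    (hpyt : ∀ k, e (k + 1) ^ 2 ≤ e k ^ 2 - d k ^ 2)
    (hesred : ∀ k, ∀ δ : ℝ, 0 < δ →
      ε (k + 1) ^ 2 ≤ (1 + δ) * (1 - lam * θ ^ 2) * ε k ^ 2
        + (1 + δ⁻¹) * Λ₀ * d k ^ 2)
    (hub : ∀ k, e k ≤ C * ε k) :
    ∃ γ α : ℝ, 0 < γ ∧ 0 < α ∧ α < 1 ∧
      ∀ k, e (k + 1) ^ 2 + γ * ε (k + 1) ^ 2 ≤ α ^ 2 * (e k ^ 2 + γ * ε k ^ 2) := by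
  set s : ℝ := lam * θ ^ 2 with hs_def
  have hθ2 : 0 < θ ^ 2 := by positivity
  have hθ2le : θ ^ 2 ≤ 1 := by nlinarith
  have hs0 : 0 < s := by positivity
  have hs1 : s < 1 := by nlinarith
  set δ : ℝ := s / (2 * (1 - s)) with hδ_def
  have hδ0 : 0 < δ := by
    apply div_pos hs0; nlinarith
  set A : ℝ := (1 + δ⁻¹) * Λ₀ with hA_def
  have hA0 : 0 < A := by
    have h : 0 < 1 + δ⁻¹ := by positivity
    positivity
  set γ : ℝ := A⁻¹ with hγ_def
  have hγ0 : 0 < γ := by positivity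
  have hγA : γ * A = 1 := inv_mul_cancel₀ (ne_of_gt hA0)
  set β : ℝ := max (1 - γ * s / (4 * C ^ 2)) (1 - s / 4) with hβ_def
  have hβ0 : 0 < β := lt_of_lt_of_le (by nlinarith) (le_max_right _ _)
  have hβ1 : β < 1 := by
    apply max_lt
    · have h : 0 < γ * s / (4 * C ^ 2) := by positivity
      linarith
    · linarith
  have h1s : (1 : ℝ) - s ≠ 0 := ne_of_gt (by linarith)
  have hδs : δ * (1 - s) = s / 2 := by
    rw [hδ_def]
    field_simp
  have hkey : (1 + δ) * (1 - s) = 1 - s / 2 := by linear_combination hδs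
  have hb1 : 1 - γ * s / (4 * C ^ 2) ≤ β := le_max_left _ _
  have hb2 : 1 - s / 4 ≤ β := le_max_right _ _
  clear_value s δ A γ β
  refine ⟨γ, Real.sqrt β, hγ0, Real.sqrt_pos.mpr hβ0, ?_, ?_⟩
  · rw [show (1 : ℝ) = Real.sqrt 1 by simp]
    exact Real.sqrt_lt_sqrt hβ0.le hβ1
  · intro k
    rw [Real.sq_sqrt hβ0.le]
    have h1 := hpyt k
    have h2 := hesred k δ hδ0
    rw [hkey, ← hA_def] at h2
    have h3 := hub k
    have he2 : e k ^ 2 ≤ C ^ 2 * ε k ^ 2 := by nlinarith [he k, hε k]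
    have hεk2 : 0 ≤ ε k ^ 2 := sq_nonneg (ε k)
    have hC2 : 0 < C ^ 2 := by positivity
    -- Step 1: absorb d k ^ 2 using γ * A = 1.
    have h2' : γ * ε (k + 1) ^ 2 ≤ γ * ((1 - s / 2) * ε k ^ 2) + d k ^ 2 := by
      have := mul_le_mul_of_nonneg_left h2 hγ0.le
      calc γ * ε (k + 1) ^ 2
          ≤ γ * ((1 - s / 2) * ε k ^ 2 + A * d k ^ 2) := this
        _ = γ * ((1 - s / 2) * ε k ^ 2) + (γ * A) * d k ^ 2 := by ring
        _ = γ * ((1 - s / 2) * ε k ^ 2) + d k ^ 2 := by rw [hγA, one_mul]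
    have step : e (k + 1) ^ 2 + γ * ε (k + 1) ^ 2
        ≤ e k ^ 2 + γ * ((1 - s / 2) * ε k ^ 2) := by linarith
    -- Step 2: contraction of the right-hand side.
    have h4 : e k ^ 2 * (1 - β) ≤ γ * s / 4 * ε k ^ 2 := by
      have h1b : 1 - β ≤ γ * s / (4 * C ^ 2) := by linarith
      have h0b : (0 : ℝ) ≤ γ * s / (4 * C ^ 2) := by positivity
      have hle : e k ^ 2 * (1 - β) ≤ C ^ 2 * ε k ^ 2 * (γ * s / (4 * C ^ 2)) :=
        mul_le_mul he2 h1b (by linarith) (by positivity)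
      have heq : C ^ 2 * ε k ^ 2 * (γ * s / (4 * C ^ 2)) = γ * s / 4 * ε k ^ 2 := by
        field_simp
      linarith [heq ▸ hle]
    have main : e k ^ 2 + γ * ((1 - s / 2) * ε k ^ 2) ≤ β * (e k ^ 2 + γ * ε k ^ 2) := by
      nlinarith [mul_le_mul_of_nonneg_right hb2 (mul_nonneg hγ0.le hεk2)]
    linarith
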